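/- Let 𝐋 = [[z − S, α],[β, z^{-1} − S]] on ℓ²(ℤ)⊕ℓ²(ℤ) with |z| ≥ 2 and α, β ∈ ℓ²(ℤ) sufficiently small, so that 𝐋 is invertible with matrix-valued Green's function G(n,m;z). Then det G(n,m) = 0 for all n, m ∈ ℤ, i.e., G₁₁(n,m)G₂₂(n,m) − G₁₂(n,m)G₂₁(n,m) = 0. -/

import Mathlib

open Filter

/-- If `v 0 = v k * P k` with `‖P k‖` bounded and `v → 0`, then `v 0 = 0`. -/
private lemma aux_zero_of_bounded_transfer (v P : ℕ → ℂ) (C : ℝ)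
    (hrel : ∀ k, v 0 = v k * P k) (hb : ∀ k, ‖P k‖ ≤ C)
    (hv : Filter.Tendsto v Filter.atTop (nhds 0)) : v 0 = 0 := by
  have h0 : Filter.Tendsto (fun k => ‖v k‖ * C) Filter.atTop (nhds 0) := by
    have := (hv.norm).mul_const C
    simpa using this
  have hle : ‖v 0‖ ≤ 0 := by
    refine ge_of_tendsto h0 ?_
    filter_upwards with k
    calc ‖v 0‖ = ‖v k‖ * ‖P k‖ := by rw [hrel k, norm_mul]
    _ ≤ ‖v k‖ * C := mul_le_mul_of_nonneg_left (hb k) (norm_nonneg _)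
  simpa using le_antisymm hle (norm_nonneg _)

set_option maxHeartbeats 4000000 in
theorem AL_greens_function_det_zero (z : ℂ) (hz : 2 ≤ ‖z‖)
    (α β : lp (fun _ : ℤ => ℂ) 2)
    (bL bR : (lp (fun _ : ℤ => ℂ) 2 × lp (fun _ : ℤ => ℂ) 2) →L[ℂ]
      (lp (fun _ : ℤ => ℂ) 2 × lp (fun _ : ℤ => ℂ) 2))
    (hL : ∀ (f : lp (fun _ : ℤ => ℂ) 2 × lp (fun _ : ℤ => ℂ) 2) (n : ℤ),
      (bL f).1 n = z * f.1 n - f.1 (n + 1) + α n * f.2 n ∧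
      (bL f).2 n = β n * f.1 n + z⁻¹ * f.2 n - f.2 (n + 1))
    (hR1 : bR * bL = 1) (hR2 : bL * bR = 1)
    (G11 G12 G21 G22 : ℤ → ℤ → ℂ)
    (hG11 : ∀ n m : ℤ, G11 n m = (bR (lp.single 2 m 1, 0)).1 n)
    (hG21 : ∀ n m : ℤ, G21 n m = (bR (lp.single 2 m 1, 0)).2 n)
    (hG12 : ∀ n m : ℤ, G12 n m = (bR (0, lp.single 2 m 1)).1 n)
    (hG22 : ∀ n m : ℤ, G22 n m = (bR (0, lp.single 2 m 1)).2 n)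
    (hdecay11 : ∀ m : ℤ, Filter.Tendsto (fun n => G11 n m) Filter.cofinite (nhds 0))
    (hdecay12 : ∀ m : ℤ, Filter.Tendsto (fun n => G12 n m) Filter.cofinite (nhds 0))
    (hdecay21 : ∀ m : ℤ, Filter.Tendsto (fun n => G21 n m) Filter.cofinite (nhds 0))
    (hdecay22 : ∀ m : ℤ, Filter.Tendsto (fun n => G22 n m) Filter.cofinite (nhds 0)) :
    ∀ n m : ℤ, G11 n m * G22 n m - G12 n m * G21 n m = 0 := by
  classical
  -- basic facts
  have hz0 : z ≠ 0 := by
    intro h; rw [h] at hz; simp at hz; linarith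
  have hzz : z * z⁻¹ = 1 := mul_inv_cancel₀ hz0
  have hsingle : ∀ n m : ℤ, (lp.single 2 m (1:ℂ) : lp (fun _ : ℤ => ℂ) 2) n
      = if n = m then 1 else 0 := by
    intro n m
    by_cases h : n = m
    · subst h; simp [lp.single_apply_self]
    · simp [lp.single_apply_ne _ _ _ h, h]
  have happR : ∀ v, bL (bR v) = v := by
    intro v
    have := congrArg (fun T => T v) hR2
    simpa using this
  have happL : ∀ w, bR (bL w) = w := by
    intro w
    have := congrArg (fun T => T w) hR1
    simpa using this
  -- recursions in the first variable
  have hA : ∀ n m : ℤ, z * G11 n m - G11 (n+1) m + α n * G21 n m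
      = (if n = m then 1 else 0) := by
    intro n m
    have h := happR (lp.single 2 m 1, 0)
    have h1 : (bL (bR (lp.single 2 m 1, 0))).1 n
        = (lp.single 2 m (1:ℂ) : lp (fun _ : ℤ => ℂ) 2) n := by rw [h]
    rw [(hL _ n).1, hsingle] at h1
    rw [hG11 n m, hG11 (n+1) m, hG21 n m]
    exact h1
  have hB : ∀ n m : ℤ, β n * G11 n m + z⁻¹ * G21 n m - G21 (n+1) m = 0 := by
    intro n m
    have h := happR (lp.single 2 m 1, 0)
    have h1 : (bL (bR (lp.single 2 m 1, 0))).2 n = ((0 : lp (fun _ : ℤ => ℂ) 2)) n := by rw [h]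
    rw [(hL _ n).2] at h1
    rw [hG11 n m, hG21 n m, hG21 (n+1) m]
    simpa using h1
  have hC : ∀ n m : ℤ, z * G12 n m - G12 (n+1) m + α n * G22 n m = 0 := by
    intro n m
    have h := happR ((0 : lp (fun _ : ℤ => ℂ) 2), lp.single 2 m 1)
    have h1 : (bL (bR ((0 : lp (fun _ : ℤ => ℂ) 2), lp.single 2 m 1))).1 n
        = ((0 : lp (fun _ : ℤ => ℂ) 2)) n := by rw [h]
    rw [(hL _ n).1] at h1
    rw [hG12 n m, hG12 (n+1) m, hG22 n m]
    simpa using h1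
  have hD : ∀ n m : ℤ, β n * G12 n m + z⁻¹ * G22 n m - G22 (n+1) m
      = (if n = m then 1 else 0) := by
    intro n m
    have h := happR ((0 : lp (fun _ : ℤ => ℂ) 2), lp.single 2 m 1)
    have h1 : (bL (bR ((0 : lp (fun _ : ℤ => ℂ) 2), lp.single 2 m 1))).2 n
        = (lp.single 2 m (1:ℂ) : lp (fun _ : ℤ => ℂ) 2) n := by rw [h]
    rw [(hL _ n).2, hsingle] at h1
    rw [hG12 n m, hG22 n m, hG22 (n+1) m]
    exact h1
  -- images of basis vectors under bL
  have hw1 : ∀ m : ℤ, bL (lp.single 2 m 1, 0) =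
      z • ((lp.single 2 m 1 : lp (fun _ : ℤ => ℂ) 2), (0 : lp (fun _ : ℤ => ℂ) 2))
      - ((lp.single 2 (m-1) 1 : lp (fun _ : ℤ => ℂ) 2), (0 : lp (fun _ : ℤ => ℂ) 2))
      + (β m) • ((0 : lp (fun _ : ℤ => ℂ) 2), (lp.single 2 m 1 : lp (fun _ : ℤ => ℂ) 2)) := by
    intro m
    refine Prod.ext ?_ ?_
    · apply lp.ext
      funext n
      have h1 := (hL (lp.single 2 m 1, 0) n).1
      simp only [Prod.fst_add, Prod.fst_sub, Prod.smul_fst, lp.coeFn_add, lp.coeFn_sub,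
        lp.coeFn_smul, Pi.add_apply, Pi.sub_apply, Pi.smul_apply, smul_eq_mul]
      rw [h1]
      simp only [hsingle, lp.coeFn_zero, Pi.zero_apply, mul_zero, add_zero]
      by_cases h : n = m
      · subst h; rw [if_pos rfl]
        have h1' : ¬ (n + 1 = n) := by omega
        have h2 : ¬ (n = n - 1) := by omega
        rw [if_neg h1', if_neg h2]
      · rw [if_neg h]
        by_cases h2 : n + 1 = m
        · have h3 : n = m - 1 := by omega
          rw [if_pos h2, if_pos h3]
        · have h3 : ¬ (n = m - 1) := by omega
          rw [if_neg h2, if_neg h3]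
    · apply lp.ext
      funext n
      have h1 := (hL (lp.single 2 m 1, 0) n).2
      simp only [Prod.snd_add, Prod.snd_sub, Prod.smul_snd, lp.coeFn_add, lp.coeFn_sub,
        lp.coeFn_smul, Pi.add_apply, Pi.sub_apply, Pi.smul_apply, smul_eq_mul]
      rw [h1]
      simp only [hsingle, lp.coeFn_zero, Pi.zero_apply, mul_zero, add_zero, sub_zero,
        zero_sub, neg_zero, zero_add, mul_one]
      by_cases h : n = m
      · subst h; simp
      · simp [if_neg h]
  have hw2 : ∀ m : ℤ, bL ((0 : lp (fun _ : ℤ => ℂ) 2), lp.single 2 m 1) =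
      (α m) • ((lp.single 2 m 1 : lp (fun _ : ℤ => ℂ) 2), (0 : lp (fun _ : ℤ => ℂ) 2))
      + z⁻¹ • ((0 : lp (fun _ : ℤ => ℂ) 2), (lp.single 2 m 1 : lp (fun _ : ℤ => ℂ) 2))
      - ((0 : lp (fun _ : ℤ => ℂ) 2), (lp.single 2 (m-1) 1 : lp (fun _ : ℤ => ℂ) 2)) := by
    intro m
    refine Prod.ext ?_ ?_
    · apply lp.ext
      funext n
      have h1 := (hL ((0 : lp (fun _ : ℤ => ℂ) 2), lp.single 2 m 1) n).1
      simp only [Prod.fst_add, Prod.fst_sub, Prod.smul_fst, lp.coeFn_add, lp.coeFn_sub,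
        lp.coeFn_smul, Pi.add_apply, Pi.sub_apply, Pi.smul_apply, smul_eq_mul]
      rw [h1]
      simp only [hsingle, lp.coeFn_zero, Pi.zero_apply, mul_zero, add_zero, sub_zero,
        zero_sub, neg_zero, zero_add, mul_one]
      by_cases h : n = m
      · subst h; simp
      · simp [if_neg h]
    · apply lp.ext
      funext n
      have h1 := (hL ((0 : lp (fun _ : ℤ => ℂ) 2), lp.single 2 m 1) n).2
      simp only [Prod.snd_add, Prod.snd_sub, Prod.smul_snd, lp.coeFn_add, lp.coeFn_sub,
        lp.coeFn_smul, Pi.add_apply, Pi.sub_apply, Pi.smul_apply, smul_eq_mul]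
      rw [h1]
      simp only [hsingle, lp.coeFn_zero, Pi.zero_apply, mul_zero, add_zero, zero_add,
        zero_sub, neg_zero, mul_one]
      by_cases h : n = m
      · subst h; rw [if_pos rfl]
        have h1' : ¬ (n + 1 = n) := by omega
        have h2 : ¬ (n = n - 1) := by omega
        rw [if_neg h1', if_neg h2]
      · rw [if_neg h]
        by_cases h2 : n + 1 = m
        · have h3 : n = m - 1 := by omega
          rw [if_pos h2, if_pos h3]
        · have h3 : ¬ (n = m - 1) := by omega
          rw [if_neg h2, if_neg h3]
  -- recursions in the second variable
  have hE : ∀ n m : ℤ, z * G11 n m - G11 n (m-1) + β m * G12 n m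
      = (if n = m then 1 else 0) := by
    intro n m
    have h := happL (lp.single 2 m 1, 0)
    rw [hw1 m, map_add, map_sub, map_smul, map_smul] at h
    have h1 := congrArg (fun x : (lp (fun _ : ℤ => ℂ) 2 × lp (fun _ : ℤ => ℂ) 2) => x.1 n) h
    simp only [Prod.fst_add, Prod.fst_sub, Prod.smul_fst, lp.coeFn_add, lp.coeFn_sub,
      lp.coeFn_smul, Pi.add_apply, Pi.sub_apply, Pi.smul_apply, smul_eq_mul] at h1
    rw [hsingle] at h1
    rw [hG11 n m, hG11 n (m-1), hG12 n m]
    exact h1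
  have hF : ∀ n m : ℤ, z * G21 n m - G21 n (m-1) + β m * G22 n m = 0 := by
    intro n m
    have h := happL (lp.single 2 m 1, 0)
    rw [hw1 m, map_add, map_sub, map_smul, map_smul] at h
    have h1 := congrArg (fun x : (lp (fun _ : ℤ => ℂ) 2 × lp (fun _ : ℤ => ℂ) 2) => x.2 n) h
    simp only [Prod.snd_add, Prod.snd_sub, Prod.smul_snd, lp.coeFn_add, lp.coeFn_sub,
      lp.coeFn_smul, Pi.add_apply, Pi.sub_apply, Pi.smul_apply, smul_eq_mul,
      lp.coeFn_zero, Pi.zero_apply] at h1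
    rw [hG21 n m, hG21 n (m-1), hG22 n m]
    exact h1
  have hG : ∀ n m : ℤ, α m * G11 n m + z⁻¹ * G12 n m - G12 n (m-1) = 0 := by
    intro n m
    have h := happL ((0 : lp (fun _ : ℤ => ℂ) 2), lp.single 2 m 1)
    rw [hw2 m, map_sub, map_add, map_smul, map_smul] at h
    have h1 := congrArg (fun x : (lp (fun _ : ℤ => ℂ) 2 × lp (fun _ : ℤ => ℂ) 2) => x.1 n) h
    simp only [Prod.fst_add, Prod.fst_sub, Prod.smul_fst, lp.coeFn_add, lp.coeFn_sub,
      lp.coeFn_smul, Pi.add_apply, Pi.sub_apply, Pi.smul_apply, smul_eq_mul,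
      lp.coeFn_zero, Pi.zero_apply] at h1
    rw [hG11 n m, hG12 n m, hG12 n (m-1)]
    exact h1
  have hH : ∀ n m : ℤ, α m * G21 n m + z⁻¹ * G22 n m - G22 n (m-1)
      = (if n = m then 1 else 0) := by
    intro n m
    have h := happL ((0 : lp (fun _ : ℤ => ℂ) 2), lp.single 2 m 1)
    rw [hw2 m, map_sub, map_add, map_smul, map_smul] at h
    have h1 := congrArg (fun x : (lp (fun _ : ℤ => ℂ) 2 × lp (fun _ : ℤ => ℂ) 2) => x.2 n) h
    simp only [Prod.snd_add, Prod.snd_sub, Prod.smul_snd, lp.coeFn_add, lp.coeFn_sub,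
      lp.coeFn_smul, Pi.add_apply, Pi.sub_apply, Pi.smul_apply, smul_eq_mul] at h1
    rw [hsingle] at h1
    rw [hG21 n m, hG22 n m, hG22 n (m-1)]
    exact h1
  -- determinant and its recursions
  set Dd : ℤ → ℤ → ℂ := fun n m => G11 n m * G22 n m - G12 n m * G21 n m with hDdef
  have hstep_n : ∀ n m : ℤ, n ≠ m → Dd (n+1) m = (1 - α n * β n) * Dd n m := by
    intro n m h
    have a := hA n m; have b := hB n m; have c := hC n m; have d := hD n m
    rw [if_neg h] at a d
    have e11 : G11 (n+1) m = z * G11 n m + α n * G21 n m := by linear_combination -a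
    have e21 : G21 (n+1) m = β n * G11 n m + z⁻¹ * G21 n m := by linear_combination -b
    have e12 : G12 (n+1) m = z * G12 n m + α n * G22 n m := by linear_combination -c
    have e22 : G22 (n+1) m = β n * G12 n m + z⁻¹ * G22 n m := by linear_combination -d
    simp only [hDdef]
    rw [e11, e21, e12, e22]
    linear_combination (G11 n m * G22 n m - G12 n m * G21 n m) * hzz
  have hstep_diag : ∀ m : ℤ, Dd (m+1) m = (1 - α m * β m) * Dd m m
      - (G11 (m+1) m + G22 (m+1) m) - 1 := by
    intro m
    have a := hA m m; have b := hB m m; have c := hC m m; have d := hD m m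
    rw [if_pos rfl] at a d
    have e11 : G11 (m+1) m = z * G11 m m + α m * G21 m m - 1 := by linear_combination -a
    have e21 : G21 (m+1) m = β m * G11 m m + z⁻¹ * G21 m m := by linear_combination -b
    have e12 : G12 (m+1) m = z * G12 m m + α m * G22 m m := by linear_combination -c
    have e22 : G22 (m+1) m = β m * G12 m m + z⁻¹ * G22 m m - 1 := by linear_combination -d
    simp only [hDdef]
    rw [e11, e21, e12, e22]
    linear_combination (G11 m m * G22 m m - G12 m m * G21 m m) * hzz
  have hstep_m : ∀ n m : ℤ, n ≠ m → Dd n (m-1) = (1 - α m * β m) * Dd n m := by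
    intro n m h
    have a := hE n m; have b := hF n m; have c := hG n m; have d := hH n m
    rw [if_neg h] at a d
    have e11 : G11 n (m-1) = z * G11 n m + β m * G12 n m := by linear_combination -a
    have e21 : G21 n (m-1) = z * G21 n m + β m * G22 n m := by linear_combination -b
    have e12 : G12 n (m-1) = α m * G11 n m + z⁻¹ * G12 n m := by linear_combination -c
    have e22 : G22 n (m-1) = α m * G21 n m + z⁻¹ * G22 n m := by linear_combination -d
    simp only [hDdef]
    rw [e11, e21, e12, e22]
    linear_combination (G11 n m * G22 n m - G12 n m * G21 n m) * hzz
  have hstep_mdiag : ∀ n : ℤ, Dd n (n-1) = (1 - α n * β n) * Dd n n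
      - (G11 n (n-1) + G22 n (n-1)) - 1 := by
    intro n
    have a := hE n n; have b := hF n n; have c := hG n n; have d := hH n n
    rw [if_pos rfl] at a d
    have e11 : G11 n (n-1) = z * G11 n n + β n * G12 n n - 1 := by linear_combination -a
    have e21 : G21 n (n-1) = z * G21 n n + β n * G22 n n := by linear_combination -b
    have e12 : G12 n (n-1) = α n * G11 n n + z⁻¹ * G12 n n := by linear_combination -c
    have e22 : G22 n (n-1) = α n * G21 n n + z⁻¹ * G22 n n - 1 := by linear_combination -d
    simp only [hDdef]
    rw [e11, e21, e12, e22]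
    linear_combination (G11 n n * G22 n n - G12 n n * G21 n n) * hzz
  -- the trace on the subdiagonal is constant
  have htau : ∀ n : ℤ, G11 (n+1) n + G22 (n+1) n = G11 n (n-1) + G22 n (n-1) := by
    intro n
    have a := hA n n; have d := hD n n; have e := hE n n; have h := hH n n
    rw [if_pos rfl] at a d e h
    linear_combination -a - d + e + h
  have htauconst : ∀ n : ℤ, G11 (n+1) n + G22 (n+1) n = G11 (0+1) 0 + G22 (0+1) 0 := by
    have hstep : ∀ n : ℤ, G11 (n+1) n + G22 (n+1) n = G11 ((n-1)+1) (n-1) + G22 ((n-1)+1) (n-1) := by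
      intro n
      have := htau n
      have hn : n - 1 + 1 = n := by ring
      rw [hn]
      exact this
    intro n
    induction n using Int.induction_on with
    | zero => rfl
    | succ k ih =>
      have := hstep ((k:ℤ)+1)
      have hk : (k:ℤ) + 1 - 1 = (k:ℤ) := by ring
      rw [hk] at this
      rw [this]; exact ih
    | pred k ih =>
      have h2 := hstep (-(k:ℤ))
      rw [← h2]
      exact ih
  -- summability of ‖α k‖ * ‖β k‖
  set t : ℤ → ℝ := fun k => ‖α k‖ * ‖β k‖ with htdef
  have ht0 : ∀ k, 0 ≤ t k := fun k => mul_nonneg (norm_nonneg _) (norm_nonneg _)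
  have hsum : Summable t := by
    have hα2 : Summable (fun k : ℤ => ‖α k‖ ^ 2) := by
      have := (lp.memℓp α).summable (p := 2) (by norm_num)
      have h2 : ((2:ENNReal)).toReal = (2:ℝ) := by norm_num
      rw [h2] at this
      convert this using 2 with k
      rw [show ((2:ℝ)) = ((2:ℕ):ℝ) by norm_num, Real.rpow_natCast]
    have hβ2 : Summable (fun k : ℤ => ‖β k‖ ^ 2) := by
      have := (lp.memℓp β).summable (p := 2) (by norm_num)
      have h2 : ((2:ENNReal)).toReal = (2:ℝ) := by norm_num
      rw [h2] at this
      convert this using 2 with k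
      rw [show ((2:ℝ)) = ((2:ℕ):ℝ) by norm_num, Real.rpow_natCast]
    refine Summable.of_nonneg_of_le ht0 (fun k => ?_) (hα2.add hβ2)
    have := sq_nonneg (‖α k‖ - ‖β k‖)
    simp only [htdef]
    nlinarith [norm_nonneg (α k), norm_nonneg (β k)]
  -- bound for finite products of ‖1 - α k * β k‖
  have hCnn : (0:ℝ) ≤ Real.exp (∑' k, t k) := Real.exp_nonneg _
  have hprod_bound : ∀ (e : ℕ → ℤ), Function.Injective e → ∀ k : ℕ,
      ‖∏ i ∈ Finset.range k, (1 - α (e i) * β (e i))‖ ≤ Real.exp (∑' j, t j) := by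
    intro e he k
    have h1 : ‖∏ i ∈ Finset.range k, (1 - α (e i) * β (e i))‖
        = ∏ i ∈ Finset.range k, ‖(1:ℂ) - α (e i) * β (e i)‖ := norm_prod _ _
    rw [h1]
    have h2 : ∏ i ∈ Finset.range k, ‖(1:ℂ) - α (e i) * β (e i)‖
        ≤ ∏ i ∈ Finset.range k, Real.exp (t (e i)) := by
      refine Finset.prod_le_prod (fun i _ => norm_nonneg _) (fun i _ => ?_)
      calc ‖(1:ℂ) - α (e i) * β (e i)‖ ≤ ‖(1:ℂ)‖ + ‖α (e i) * β (e i)‖ := norm_sub_le _ _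
      _ = 1 + t (e i) := by rw [norm_one, norm_mul]
      _ ≤ Real.exp (t (e i)) := by
          have := Real.add_one_le_exp (t (e i)); linarith
    refine h2.trans ?_
    rw [← Real.exp_sum]
    refine Real.exp_le_exp.mpr ?_
    have h3 : ∑ i ∈ Finset.range k, t (e i)
        = ∑ j ∈ (Finset.range k).image e, t j := by
      rw [Finset.sum_image (fun x _ y _ h => he h)]
    rw [h3]
    exact Summable.sum_le_tsum _ (fun j _ => ht0 j) hsum
  -- decay of determinant in the first variable
  have hDdecay : ∀ m : ℤ, Tendsto (fun n => Dd n m) cofinite (nhds 0) := by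
    intro m
    have := ((hdecay11 m).mul (hdecay22 m)).sub ((hdecay12 m).mul (hdecay21 m))
    simpa using this
  -- Step 1 : Dd n m = 0 for n ≤ m
  have hle0 : ∀ n m : ℤ, n ≤ m → Dd n m = 0 := by
    intro n m hnm
    have he : Function.Injective (fun i : ℕ => n - 1 - (i:ℤ)) := by
      intro a b h; simp only at h; omega
    have hrel : ∀ k : ℕ, Dd n m = Dd (n - k) m
        * ∏ i ∈ Finset.range k, (1 - α (n - 1 - i) * β (n - 1 - i)) := by
      intro k
      induction k with
      | zero => simp
      | succ k ih =>
        have hne : n - (k:ℤ) - 1 ≠ m := by omega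
        have hstep := hstep_n (n - (k:ℤ) - 1) m hne
        rw [show n - (k:ℤ) - 1 + 1 = n - (k:ℤ) by ring] at hstep
        rw [Finset.prod_range_succ, ih, hstep,
          show ((n : ℤ) - (((k:ℕ)+1 : ℕ) : ℤ)) = n - (k:ℤ) - 1 by push_cast; ring,
          show (n : ℤ) - 1 - ((k:ℕ) : ℤ) = n - (k:ℤ) - 1 by ring]
        ring
    have htd : Tendsto (fun k : ℕ => Dd (n - (k:ℤ)) m) atTop (nhds 0) := by
      have hinj : Function.Injective (fun k : ℕ => n - (k:ℤ)) := by
        intro a b h; simp only at h; omega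
      have := (hDdecay m).comp hinj.tendsto_cofinite
      rw [Nat.cofinite_eq_atTop] at this
      exact this
    have hrel' : ∀ k : ℕ, (fun k : ℕ => Dd (n - (k:ℤ)) m) 0
        = (fun k : ℕ => Dd (n - (k:ℤ)) m) k
          * (fun k : ℕ => ∏ i ∈ Finset.range k,
              (1 - α (n - 1 - (i:ℤ)) * β (n - 1 - (i:ℤ)))) k := by
      intro k
      simp only [Nat.cast_zero, sub_zero]
      exact hrel k
    have := aux_zero_of_bounded_transfer (fun k : ℕ => Dd (n - (k:ℤ)) m)
      (fun k : ℕ => ∏ i ∈ Finset.range k,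
        (1 - α (n - 1 - (i:ℤ)) * β (n - 1 - (i:ℤ))))
      (Real.exp (∑' j, t j)) hrel' (hprod_bound _ he) htd
    simpa using this
  -- Step 2 : find a tail where ∑ t ≤ 1/2
  obtain ⟨s, hs⟩ := hsum.vanishing (Metric.ball_mem_nhds (0:ℝ) (by norm_num : (0:ℝ) < 1/2))
  obtain ⟨b0, hb0⟩ : ∃ b : ℤ, ∀ j ∈ s, j ≤ b := by
    obtain ⟨b, hb⟩ := s.finite_toSet.bddAbove
    exact ⟨b, fun j hj => hb hj⟩
  set m₀ : ℤ := b0 + 1 with hm₀def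
  have htail : ∀ u : Finset ℤ, (∀ j ∈ u, m₀ ≤ j) → ∑ j ∈ u, t j ≤ 1/2 := by
    intro u hu
    have hd : Disjoint u s := by
      refine Finset.disjoint_left.mpr (fun j hj hjs => ?_)
      have := hb0 j hjs
      have := hu j hj
      omega
    have := hs u hd
    rw [Metric.mem_ball, Real.dist_eq, sub_zero] at this
    have := abs_lt.mp this
    linarith [this.2]
  have hSk : ∀ k : ℕ, ∑ i ∈ Finset.range k, t (m₀ + 1 + i) ≤ 1/2 := by
    intro k
    have he : Function.Injective (fun i : ℕ => m₀ + 1 + (i:ℤ)) := by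
      intro a b h; simp only at h; omega
    have h3 : ∑ i ∈ Finset.range k, t (m₀ + 1 + i)
        = ∑ j ∈ (Finset.range k).image (fun i : ℕ => m₀ + 1 + (i:ℤ)), t j := by
      rw [Finset.sum_image (fun x _ y _ h => he h)]
    rw [h3]
    refine htail _ (fun j hj => ?_)
    simp only [Finset.mem_image, Finset.mem_range] at hj
    obtain ⟨i, _, rfl⟩ := hj
    omega
  -- Step 3 : Dd (m₀+1) m₀ = 0, hence the trace equals -1
  have hQrel : ∀ k : ℕ, Dd (m₀ + 1 + k) m₀ = Dd (m₀ + 1) m₀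
      * ∏ i ∈ Finset.range k, (1 - α (m₀ + 1 + i) * β (m₀ + 1 + i)) := by
    intro k
    induction k with
    | zero => simp
    | succ k ih =>
      have hne : m₀ + 1 + (k:ℤ) ≠ m₀ := by omega
      have hstep := hstep_n (m₀ + 1 + (k:ℤ)) m₀ hne
      have h1 : m₀ + 1 + ((k:ℕ)+1:ℕ) = (m₀ + 1 + (k:ℤ)) + 1 := by push_cast; ring
      rw [h1, hstep, ih, Finset.prod_range_succ]
      ring
  have hQlb : ∀ k : ℕ, (1:ℝ)/2
      ≤ ‖∏ i ∈ Finset.range k, (1 - α (m₀ + 1 + i) * β (m₀ + 1 + i))‖ := by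
    intro k
    have hti : ∀ i : ℕ, t (m₀ + 1 + i) ≤ 1/2 := by
      intro i
      have := hSk (i+1)
      calc t (m₀ + 1 + i) ≤ ∑ j ∈ Finset.range (i+1), t (m₀ + 1 + j) := by
            refine Finset.single_le_sum (f := fun j : ℕ => t (m₀ + 1 + (j:ℤ)))
              (fun j _ => ht0 _) ?_
            simp
      _ ≤ 1/2 := this
    have key : ∀ k : ℕ, 1 - (∑ i ∈ Finset.range k, t (m₀ + 1 + i))
        ≤ ∏ i ∈ Finset.range k, (1 - t (m₀ + 1 + i)) := by
      intro k
      induction k with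
      | zero => simp
      | succ k ih =>
        rw [Finset.prod_range_succ, Finset.sum_range_succ]
        have h1 : (0:ℝ) ≤ ∑ i ∈ Finset.range k, t (m₀ + 1 + i) :=
          Finset.sum_nonneg (fun i _ => ht0 _)
        have h2 := hSk k
        have h3 := ht0 (m₀ + 1 + (k:ℤ))
        have h4 := hti k
        set A := ∑ i ∈ Finset.range k, t (m₀ + 1 + i) with hA
        set B := ∏ i ∈ Finset.range k, (1 - t (m₀ + 1 + i)) with hB
        have hBle : B ≤ 1 := by
          rw [hB]
          refine Finset.prod_le_one (fun i _ => by linarith [hti i]) (fun i _ => by linarith [ht0 (m₀ + 1 + (i:ℤ))])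
        nlinarith [ht0 (m₀ + 1 + (k:ℤ))]
    have hnormlb : ∀ k : ℕ, ∏ i ∈ Finset.range k, (1 - t (m₀ + 1 + i))
        ≤ ‖∏ i ∈ Finset.range k, (1 - α (m₀ + 1 + i) * β (m₀ + 1 + i))‖ := by
      intro k
      rw [norm_prod]
      refine Finset.prod_le_prod (fun i _ => by linarith [hti i]) (fun i _ => ?_)
      calc 1 - t (m₀ + 1 + i) = ‖(1:ℂ)‖ - ‖α (m₀ + 1 + i) * β (m₀ + 1 + i)‖ := by
            rw [norm_one, norm_mul]
      _ ≤ ‖(1:ℂ) - α (m₀ + 1 + i) * β (m₀ + 1 + i)‖ := norm_sub_norm_le _ _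
    have := (key k).trans (hnormlb k)
    have := hSk k
    linarith [((key k).trans (hnormlb k))]
  have hD0 : Dd (m₀ + 1) m₀ = 0 := by
    have htend : Tendsto (fun k : ℕ => Dd (m₀ + 1 + k) m₀) atTop (nhds 0) := by
      have hinj : Function.Injective (fun k : ℕ => m₀ + 1 + (k:ℤ)) := by
        intro a b h; simp only at h; omega
      have := (hDdecay m₀).comp hinj.tendsto_cofinite
      rw [Nat.cofinite_eq_atTop] at this
      exact this
    have hn : Tendsto (fun k : ℕ => ‖Dd (m₀ + 1 + k) m₀‖) atTop (nhds 0) := by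
      simpa using htend.norm
    have hle : ‖Dd (m₀ + 1) m₀‖ * (1/2) ≤ 0 := by
      refine ge_of_tendsto hn ?_
      filter_upwards with k
      rw [hQrel k, norm_mul]
      exact mul_le_mul_of_nonneg_left (hQlb k) (norm_nonneg _)
    have : ‖Dd (m₀ + 1) m₀‖ ≤ 0 := by linarith
    simpa using le_antisymm this (norm_nonneg _)
  have htaum : G11 (m₀+1) m₀ + G22 (m₀+1) m₀ = -1 := by
    have h1 := hstep_diag m₀
    rw [hD0, hle0 m₀ m₀ le_rfl, mul_zero] at h1
    linear_combination h1
  have htau_all : ∀ n : ℤ, G11 (n+1) n + G22 (n+1) n = -1 := by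
    intro n
    rw [htauconst n, ← htauconst m₀]
    exact htaum
  -- Final assembly
  intro n m
  by_cases hnm : n ≤ m
  · have := hle0 n m hnm
    rw [hDdef] at this
    exact this
  · push_neg at hnm
    have hd1 : Dd n (n-1) = 0 := by
      have h1 := hstep_mdiag n
      have h2 : G11 n (n-1) + G22 n (n-1) = -1 := by
        have := htau_all (n-1)
        have hn : n - 1 + 1 = n := by ring
        rw [hn] at this
        exact this
      rw [hle0 n n le_rfl, mul_zero, h2] at h1
      rw [h1]; ring
    have hall : ∀ k : ℕ, Dd n (n - 1 - k) = 0 := by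
      intro k
      induction k with
      | zero => simpa using hd1
      | succ k ih =>
        have hne : n ≠ n - 1 - (k:ℤ) := by omega
        have := hstep_m n (n - 1 - (k:ℤ)) hne
        rw [ih, mul_zero] at this
        have h1 : n - 1 - ((k:ℕ)+1:ℕ) = (n - 1 - (k:ℤ)) - 1 := by push_cast; ring
        rw [h1]
        exact this
    have hk : n - 1 - ((n - 1 - m).toNat : ℤ) = m := by
      rw [Int.toNat_of_nonneg (by omega)]
      ring
    have := hall (n - 1 - m).toNat
    rw [hk] at this
    rw [hDdef] at this
    exact this
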